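/- Let φ be a rule that is aggregation independent and satisfies, for every pool W of available workers, every set A of previously hired workers, and every q ≤ |W|, that φ(W,A,⟨q⟩) equals the minority reserves choice from W: the min(⌈m·q⌉, |M ∩ W|) highest-scoring available minority workers together with the highest-scoring remaining available workers filling up to q hires in total. Then for every hiring problem (W, M, s, m) and every sequence of hires λ = ⟨q₁,…,q_t⟩ with q₁+⋯+q_t ≤ |W| and m·(q₁+⋯+q_r) an integer for every r ≤ t, φ(W,λ) = φ^SA(W,λ), the selection of the sequential adjusted minority reserves rule. -/

import Mathlib

open Finset

variable {ι : Type*} [DecidableEq ι]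

/-- The (up to) `k` highest-scoring elements of `X`, chosen greedily
(with injective scores this is the set of the `k` highest-scoring elements). -/
noncomputable def topOf (s : ι → ℝ) : ℕ → Finset ι → Finset ι
  | 0, _ => ∅
  | k + 1, X =>
    if h : X.Nonempty then
      insert (X.exists_max_image s h).choose
        (topOf s k (X.erase (X.exists_max_image s h).choose))
    else ∅

/-- `H` respects minority rights for quota `q` (w.r.t. minorities `M` and ratio `m`):
either `|M| ≥ m·q` and the fraction of minorities in `H` is at least `m`
(stated multiplicatively as `ω(H) ≥ m·|H|`), or `|M| < m·q` and `M ⊆ H`. -/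
def RespectsRightsSet (M : Finset ι) (m : ℝ) (q : ℕ) (H : Finset ι) : Prop :=
  (m * (q : ℝ) ≤ (M.card : ℝ) ∧ m * (H.card : ℝ) ≤ ((H ∩ M).card : ℝ)) ∨
  ((M.card : ℝ) < m * (q : ℝ) ∧ M ⊆ H)

/-- `H` is minority fair (w.r.t. workers `W`, minorities `M`, scores `s`, ratio `m`):
(i) within `M` and within `W ∖ M` selection follows the scores; (ii) no minority with a
higher score is left out while a non-minority is hired; (iii) a lower-scoring minority is
hired over a higher-scoring non-minority only if the minority fraction of `H` is at most
`m` (stated multiplicatively as `ω(H) ≤ m·|H|`). -/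
def MinorityFairSet (W M : Finset ι) (s : ι → ℝ) (m : ℝ) (H : Finset ι) : Prop :=
  (∀ w ∈ M, ∀ w' ∈ M, w ∈ H → w' ∉ H → s w' < s w) ∧
  (∀ w ∈ W \ M, ∀ w' ∈ W \ M, w ∈ H → w' ∉ H → s w' < s w) ∧
  (∀ w ∈ W \ M, ∀ w' ∈ M, s w < s w' → w ∈ H → w' ∈ H) ∧
  ((∃ w ∈ W \ M, ∃ w' ∈ M, s w' < s w ∧ w ∉ H ∧ w' ∈ H) →
    ((H ∩ M).card : ℝ) ≤ m * (H.card : ℝ))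

/-- One round of the minority reserves choice from pool `P`: the `min(⌈m·q⌉, |M ∩ P|)`
highest-scoring available minority workers, then the highest-scoring remaining available
workers filling up to `q` hires in total. -/
noncomputable def smRound (M : Finset ι) (s : ι → ℝ) (m : ℝ) (P : Finset ι) (q : ℕ) :
    Finset ι :=
  let A1 := topOf s (min ⌈m * (q : ℝ)⌉₊ (P ∩ M).card) (P ∩ M)
  A1 ∪ topOf s (q - A1.card) (P \ A1)

/-- The sequential use of minority reserves rule `φ^SM`. -/
noncomputable def phiSM (M : Finset ι) (s : ι → ℝ) (m : ℝ) : Finset ι → List ℕ → Finset ι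
  | _, [] => ∅
  | P, q :: rest => smRound M s m P q ∪ phiSM M s m (P \ smRound M s m P q) rest

/-- One round of the adjusted minority reserves choice from pool `P`: `hired` is the
number of minority workers hired in earlier rounds, `Q` is the cumulative quota up to and
including this round, and `q` is the quota of this round.  First the
`min(max(⌈m·Q⌉ − hired, 0), |M ∩ P|)` highest-scoring available minority workers are
hired, then the highest-scoring remaining available workers fill up to `q` hires. -/
noncomputable def saRound (M : Finset ι) (s : ι → ℝ) (m : ℝ) (P : Finset ι)
    (hired Q q : ℕ) : Finset ι :=
  let A1 := topOf s (min (⌈m * (Q : ℝ)⌉₊ - hired) (P ∩ M).card) (P ∩ M)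
  A1 ∪ topOf s (q - A1.card) (P \ A1)

/-- Auxiliary recursion for the sequential adjusted minority reserves rule:
`P` is the current pool, `A` the set of previously hired workers and `Q` the cumulative
quota of previous rounds. -/
noncomputable def phiSAaux (M : Finset ι) (s : ι → ℝ) (m : ℝ) :
    Finset ι → Finset ι → ℕ → List ℕ → Finset ι
  | _, _, _, [] => ∅
  | P, A, Q, q :: rest =>
    let H := saRound M s m P ((A ∩ M).card) (Q + q) q
    H ∪ phiSAaux M s m (P \ H) (A ∪ H) (Q + q) rest

/-- The sequential adjusted minority reserves rule `φ^SA`. -/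
noncomputable def phiSA (M : Finset ι) (s : ι → ℝ) (m : ℝ) (W : Finset ι)
    (lam : List ℕ) : Finset ι :=
  phiSAaux M s m W ∅ 0 lam

/-- A rule: for each hiring problem `(M, s, m)`, each pool `W` of available workers, each
set `A` of previously hired workers and each quota `q`, it selects `min(q, |W|)` workers
from `W`. -/
structure Rule (ι : Type*) [DecidableEq ι] where
  sel : Finset ι → (ι → ℝ) → ℝ → Finset ι → Finset ι → ℕ → Finset ι
  sel_subset : ∀ M s m W A q, sel M s m W A q ⊆ W
  sel_card : ∀ M s m W A q, (sel M s m W A q).card = min q W.card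

/-- Round-by-round application of a rule along a sequence of hires: after each round the
hired workers are removed from the pool and added to the previously-hired set. -/
def Rule.seq (φ : Rule ι) (M : Finset ι) (s : ι → ℝ) (m : ℝ) :
    Finset ι → Finset ι → List ℕ → Finset ι
  | _, _, [] => ∅
  | W, A, q :: rest =>
    φ.sel M s m W A q ∪
      φ.seq M s m (W \ φ.sel M s m W A q) (A ∪ φ.sel M s m W A q) rest

/-- A rule respects static minority rights if, for every hiring problem and every
one-round sequence `⟨q⟩` with `q ≤ |W|`, the selected set respects minority rights for
quota `q`. -/
def Rule.StaticMinorityRights (φ : Rule ι) : Prop :=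
  ∀ (M : Finset ι) (s : ι → ℝ) (m : ℝ) (W : Finset ι), M ⊆ W → Set.InjOn s ↑W →
    0 ≤ m → m ≤ 1 → ∀ q : ℕ, q ≤ W.card →
      RespectsRightsSet M m q (φ.seq M s m W ∅ [q])

/-- A rule is static minority fair if, for every hiring problem and every one-round
sequence `⟨q⟩` with `q ≤ |W|`, the selected set is minority fair. -/
def Rule.StaticMinorityFair (φ : Rule ι) : Prop :=
  ∀ (M : Finset ι) (s : ι → ℝ) (m : ℝ) (W : Finset ι), M ⊆ W → Set.InjOn s ↑W →
    0 ≤ m → m ≤ 1 → ∀ q : ℕ, q ≤ W.card →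
      MinorityFairSet W M s m (φ.seq M s m W ∅ [q])

/-- A rule is aggregation independent if `φ(W,A,q) = φ(W,A,⟨q₁, q − q₁⟩)` for all
`q ≥ q₁ ≥ 0` and all `W`, `A`. -/
def Rule.AggIndep (φ : Rule ι) : Prop :=
  ∀ (M : Finset ι) (s : ι → ℝ) (m : ℝ) (W A : Finset ι) (q q₁ : ℕ), q₁ ≤ q →
    φ.sel M s m W A q = φ.seq M s m W A [q₁, q - q₁]



section AuxProof
variable {s : ι → ℝ}

lemma topOf_zero (X : Finset ι) : topOf s 0 X = ∅ := rfl

lemma topOf_succ (k : ℕ) (X : Finset ι) (h : X.Nonempty) :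
    topOf s (k+1) X = insert (X.exists_max_image s h).choose
      (topOf s k (X.erase (X.exists_max_image s h).choose)) := by
  rw [topOf, dif_pos h]

lemma topOf_empty (k : ℕ) : topOf s k (∅ : Finset ι) = ∅ := by
  cases k <;> simp [topOf]

lemma topOf_subset (k : ℕ) (X : Finset ι) : topOf s k X ⊆ X := by
  induction k generalizing X with
  | zero => simp [topOf_zero]
  | succ k ih =>
    obtain h | h := X.eq_empty_or_nonempty
    · subst h; simp [topOf_empty]
    · rw [topOf_succ k X h]
      intro x hx
      rcases Finset.mem_insert.mp hx with rfl | hx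
      · exact (X.exists_max_image s h).choose_spec.1
      · exact Finset.erase_subset _ _ (ih _ hx)

lemma card_topOf (k : ℕ) (X : Finset ι) : (topOf s k X).card = min k X.card := by
  induction k generalizing X with
  | zero => simp [topOf_zero]
  | succ k ih =>
    obtain h | h := X.eq_empty_or_nonempty
    · subst h; simp [topOf_empty]
    · rw [topOf_succ k X h, Finset.card_insert_of_notMem, ih,
        Finset.card_erase_of_mem (X.exists_max_image s h).choose_spec.1]
      · have : X.card ≠ 0 := Finset.card_ne_zero.mpr h
        omega
      · intro hmem
        exact (Finset.notMem_erase _ _) (topOf_subset k _ hmem)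

lemma topOf_add (j k : ℕ) (X : Finset ι) :
    topOf s (j + k) X = topOf s j X ∪ topOf s k (X \ topOf s j X) := by
  induction j generalizing X with
  | zero => simp [topOf_zero]
  | succ j ih =>
    obtain h | h := X.eq_empty_or_nonempty
    · subst h; simp [topOf_empty]
    · have e2 : j + 1 + k = (j + k) + 1 := by omega
      rw [e2, topOf_succ _ X h, topOf_succ j X h, ih]
      set c := (X.exists_max_image s h).choose with hcdef
      have hXd : X \ insert c (topOf s j (X.erase c)) =
          (X.erase c) \ topOf s j (X.erase c) := by
        ext x
        simp only [Finset.mem_sdiff, Finset.mem_erase, Finset.mem_insert]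
        tauto
      rw [Finset.insert_union, hXd]

lemma topOf_mono {j k : ℕ} (h : j ≤ k) (X : Finset ι) : topOf s j X ⊆ topOf s k X := by
  obtain ⟨d, rfl⟩ := Nat.exists_eq_add_of_le h
  rw [topOf_add]; exact Finset.subset_union_left

lemma le_score_topOf {k : ℕ} {X : Finset ι} {x y : ι} (hx : x ∈ topOf s k X)
    (hy : y ∈ X) (hy' : y ∉ topOf s k X) : s y ≤ s x := by
  induction k generalizing X with
  | zero => rw [topOf_zero] at hx; simp at hx
  | succ k ih =>
    have h : X.Nonempty := ⟨y, hy⟩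
    rw [topOf_succ k X h] at hx hy'
    set c := (X.exists_max_image s h).choose with hcdef
    rcases Finset.mem_insert.mp hx with rfl | hx
    · exact (X.exists_max_image s h).choose_spec.2 y hy
    · have hyc : y ≠ c := by rintro rfl; exact hy' (Finset.mem_insert_self _ _)
      exact ih hx (Finset.mem_erase.mpr ⟨hyc, hy⟩)
        (fun hmem => hy' (Finset.mem_insert_of_mem hmem))

lemma lt_score_topOf {W : Finset ι} (hs : Set.InjOn s ↑W) {X : Finset ι} (hXW : X ⊆ W)
    {k : ℕ} {x y : ι} (hx : x ∈ topOf s k X) (hy : y ∈ X) (hy' : y ∉ topOf s k X) :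
    s y < s x := by
  refine lt_of_le_of_ne (le_score_topOf hx hy hy') (fun e => hy' ?_)
  have : y = x := hs (Finset.mem_coe.mpr (hXW hy))
    (Finset.mem_coe.mpr (hXW (topOf_subset _ _ hx))) e
  exact this ▸ hx

lemma mem_topOf_of_lt {k : ℕ} {X : Finset ι} {x y : ι} (hx : x ∈ topOf s k X)
    (hy : y ∈ X) (h : s x < s y) : y ∈ topOf s k X := by
  by_contra hy'
  exact absurd (le_score_topOf hx hy hy') (not_le.mpr h)

lemma topOf_unique {W : Finset ι} (hs : Set.InjOn s ↑W) {X S : Finset ι} {k : ℕ}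
    (hXW : X ⊆ W) (hSX : S ⊆ X) (hcard : S.card = min k X.card)
    (hdom : ∀ x ∈ S, ∀ y ∈ X, y ∉ S → s y < s x) : topOf s k X = S := by
  have hT : (topOf s k X).card = S.card := by rw [card_topOf, hcard]
  have hsub : topOf s k X ⊆ S := by
    intro t ht
    by_contra hts
    have h1 : (S \ topOf s k X).Nonempty := by
      rw [← Finset.card_pos, Finset.card_sdiff_comm hT.symm, Finset.card_pos]
      exact ⟨t, Finset.mem_sdiff.mpr ⟨ht, hts⟩⟩
    obtain ⟨u, hu⟩ := h1
    rw [Finset.mem_sdiff] at hu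
    have h2 := hdom u hu.1 t (topOf_subset _ _ ht) hts
    have h3 := le_score_topOf ht (hSX hu.1) hu.2
    linarith
  exact Finset.eq_of_subset_of_card_le hsub (le_of_eq hT.symm)

lemma mem_topOf_of_rank {W X : Finset ι} (hs : Set.InjOn s ↑W) (hXW : X ⊆ W) {C : ℕ}
    (hC : C ≤ X.card) {z : ι} (hz : z ∈ X)
    (hrank : (X.filter (fun w => s z < s w)).card < C) : z ∈ topOf s C X := by
  by_contra h
  have hsub : topOf s C X ⊆ X.filter (fun w => s z < s w) := fun t ht =>
    Finset.mem_filter.mpr ⟨topOf_subset _ _ ht, lt_score_topOf hs hXW ht hz h⟩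
  have := Finset.card_le_card hsub
  rw [card_topOf] at this
  omega

lemma lemG (W M : Finset ι) (hs : Set.InjOn s ↑W) (u v j : ℕ)
    (hu : u ≤ (W ∩ M).card) (hv : v ≤ (W \ M).card) (hC : u + v + j ≤ W.card) :
    (topOf s u (W ∩ M) ∪ topOf s v (W \ M)) ∪
      topOf s j (W \ (topOf s u (W ∩ M) ∪ topOf s v (W \ M)))
    = topOf s (max u (min ((topOf s (u+v+j) W ∩ M).card) (u + v + j - v))) (W ∩ M) ∪
      topOf s ((u+v+j) - max u (min ((topOf s (u+v+j) W ∩ M).card) (u + v + j - v)))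
        (W \ M) := by
  set C := u + v + j with hCdef
  set μ := (topOf s C W ∩ M).card with hμdef
  set y := max u (min μ (C - v)) with hydef
  have hMWsub : W ∩ M ⊆ W := Finset.inter_subset_left
  have hNWsub : W \ M ⊆ W := Finset.sdiff_subset
  have hμMW : μ ≤ (W ∩ M).card := by
    apply Finset.card_le_card
    intro x hx
    rw [Finset.mem_inter] at hx ⊢
    exact ⟨topOf_subset _ _ hx.1, hx.2⟩
  have hcardCW : (topOf s C W).card = C := by
    rw [card_topOf]; omega
  have hCN : C ≤ μ + (W \ M).card := by
    have h1 : (topOf s C W).card = μ + (topOf s C W \ M).card := by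
      rw [hμdef, Finset.card_inter_add_card_sdiff]
    have h2 : topOf s C W \ M ⊆ W \ M :=
      Finset.sdiff_subset_sdiff (topOf_subset _ _) (le_refl _)
    have := Finset.card_le_card h2
    omega
  have hμC : μ ≤ C := le_trans (Finset.card_le_card Finset.inter_subset_left)
    (le_of_eq hcardCW)
  have hy_le_MW : y ≤ (W ∩ M).card := by omega
  have hy_le_Cv : y ≤ C - v := by omega
  have hu_le_y : u ≤ y := le_max_left _ _
  have hv_le : v ≤ C - y := by omega
  have hCy_NW : C - y ≤ (W \ M).card := by omega
  have cru : (topOf s u (W ∩ M)).card = u := by rw [card_topOf]; omega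
  have cnv : (topOf s v (W \ M)).card = v := by rw [card_topOf]; omega
  have cry : (topOf s y (W ∩ M)).card = y := by rw [card_topOf]; omega
  have cny : (topOf s (C - y) (W \ M)).card = C - y := by rw [card_topOf]; omega
  set S : Finset ι := topOf s y (W ∩ M) ∪ topOf s (C - y) (W \ M) with hSdef
  have hdisjS : Disjoint (topOf s y (W ∩ M)) (topOf s (C - y) (W \ M)) := by
    apply Finset.disjoint_left.mpr
    intro a ha ha'
    have h1 := topOf_subset _ _ ha
    have h2 := topOf_subset _ _ ha'
    rw [Finset.mem_inter] at h1; rw [Finset.mem_sdiff] at h2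
    exact h2.2 h1.2
  have hdisjuv : Disjoint (topOf s u (W ∩ M)) (topOf s v (W \ M)) := by
    apply Finset.disjoint_left.mpr
    intro a ha ha'
    have h1 := topOf_subset _ _ ha
    have h2 := topOf_subset _ _ ha'
    rw [Finset.mem_inter] at h1; rw [Finset.mem_sdiff] at h2
    exact h2.2 h1.2
  have hcardS : S.card = C := by
    rw [hSdef, Finset.card_union_of_disjoint hdisjS, cry, cny]; omega
  have hsubuv : topOf s u (W ∩ M) ∪ topOf s v (W \ M) ⊆ S :=
    Finset.union_subset_union (topOf_mono hu_le_y _) (topOf_mono hv_le _)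
  have hSW : S ⊆ W := Finset.union_subset (le_trans (topOf_subset _ _) hMWsub)
    (le_trans (topOf_subset _ _) hNWsub)
  have hcarduv : (topOf s u (W ∩ M) ∪ topOf s v (W \ M)).card = u + v := by
    rw [Finset.card_union_of_disjoint hdisjuv, cru, cnv]
  have hfill : topOf s j (W \ (topOf s u (W ∩ M) ∪ topOf s v (W \ M)))
      = S \ (topOf s u (W ∩ M) ∪ topOf s v (W \ M)) := by
    apply topOf_unique hs (Finset.sdiff_subset)
    · exact Finset.sdiff_subset_sdiff hSW (le_refl _)
    · have h1 : (S \ (topOf s u (W ∩ M) ∪ topOf s v (W \ M))).card = j := by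
        rw [Finset.card_sdiff_of_subset hsubuv, hcardS, hcarduv]; omega
      have h2 : j ≤ (W \ (topOf s u (W ∩ M) ∪ topOf s v (W \ M))).card := by
        rw [Finset.card_sdiff_of_subset (Finset.union_subset (le_trans (topOf_subset _ _) hMWsub)
          (le_trans (topOf_subset _ _) hNWsub)), hcarduv]
        omega
      omega
    · rintro x hx z hz hz'
      rw [Finset.mem_sdiff] at hx hz
      have hzS : z ∉ S := fun h => hz' (Finset.mem_sdiff.mpr ⟨h, hz.2⟩)
      have hzW : z ∈ W := hz.1
      have hxS : x ∈ S := hx.1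
      have hxW : x ∈ W := hSW hxS
      have hxru : x ∉ topOf s u (W ∩ M) := fun h => hx.2 (Finset.mem_union_left _ h)
      have hxnv : x ∉ topOf s v (W \ M) := fun h => hx.2 (Finset.mem_union_right _ h)
      have hzry : z ∉ topOf s y (W ∩ M) := fun h => hzS (Finset.mem_union_left _ h)
      have hzny : z ∉ topOf s (C - y) (W \ M) := fun h => hzS (Finset.mem_union_right _ h)
      rw [hSdef, Finset.mem_union] at hxS
      rcases hxS with hxr | hxn
      · -- x ∈ r_y \ r_u (a minority)
        have hxM : x ∈ M := (Finset.mem_inter.mp (topOf_subset _ _ hxr)).2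
        by_cases hzM : z ∈ M
        · exact lt_score_topOf hs hMWsub hxr (Finset.mem_inter.mpr ⟨hzW, hzM⟩) hzry
        · -- P1 : z a nonminority outside n_{C-y}
          have hzNW : z ∈ W \ M := Finset.mem_sdiff.mpr ⟨hzW, hzM⟩
          by_contra hcon
          have hsxz : s x < s z := by
            rcases lt_trichotomy (s x) (s z) with h | h | h
            · exact h
            · exact absurd (hs (Finset.mem_coe.mpr hxW) (Finset.mem_coe.mpr hzW) h)
                (fun e => hzM (e ▸ hxM))
            · exact absurd h hcon
          have huy : u < y := by
            by_contra h
            push_neg at h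
            exact hxru (topOf_mono h _ hxr)
          have hyμ : y ≤ μ := by omega
          obtain ⟨xm, hxmr, hxmmin⟩ :=
            Finset.exists_min_image (topOf s y (W ∩ M)) s ⟨x, hxr⟩
          have hxmW : xm ∈ W := hMWsub (topOf_subset _ _ hxmr)
          have hbig : (topOf s y (W ∩ M)).erase xm ∪
              insert z (topOf s (C - y) (W \ M)) ⊆ W.filter (fun w => s xm < s w) := by
            intro w hw
            rw [Finset.mem_union] at hw
            rcases hw with hw | hw
            · rw [Finset.mem_erase] at hw
              have hwW : w ∈ W := hMWsub (topOf_subset _ _ hw.2)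
              refine Finset.mem_filter.mpr ⟨hwW, lt_of_le_of_ne (hxmmin w hw.2) ?_⟩
              exact fun e => hw.1 (hs (Finset.mem_coe.mpr hxmW) (Finset.mem_coe.mpr hwW) e).symm
            · rw [Finset.mem_insert] at hw
              have hxmx : s xm ≤ s x := hxmmin x hxr
              rcases hw with rfl | hw
              · exact Finset.mem_filter.mpr ⟨hzW, lt_of_le_of_lt hxmx hsxz⟩
              · have hzw : s z ≤ s w := le_score_topOf hw hzNW hzny
                exact Finset.mem_filter.mpr ⟨hNWsub (topOf_subset _ _ hw),
                  lt_of_le_of_lt hxmx (lt_of_lt_of_le hsxz hzw)⟩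
          have hdisj2 : Disjoint ((topOf s y (W ∩ M)).erase xm)
              (insert z (topOf s (C - y) (W \ M))) := by
            apply Finset.disjoint_left.mpr
            intro a ha ha'
            have haM : a ∈ M :=
              (Finset.mem_inter.mp (topOf_subset _ _ (Finset.mem_of_mem_erase ha))).2
            rw [Finset.mem_insert] at ha'
            rcases ha' with rfl | ha'
            · exact hzM haM
            · exact (Finset.mem_sdiff.mp (topOf_subset _ _ ha')).2 haM
          have hcardbig : C ≤ (W.filter (fun w => s xm < s w)).card := by
            have h1 := Finset.card_le_card hbig
            rw [Finset.card_union_of_disjoint hdisj2,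
              Finset.card_erase_of_mem hxmr,
              Finset.card_insert_of_notMem hzny, cry, cny] at h1
            omega
          have hxmnt : xm ∉ topOf s C W := by
            intro hmem
            have hsub3 : W.filter (fun w => s xm < s w) ⊆ topOf s C W := by
              intro w hw
              rw [Finset.mem_filter] at hw
              exact mem_topOf_of_lt hmem hw.1 hw.2
            have hne : xm ∉ W.filter (fun w => s xm < s w) := by
              simp
            have hss : W.filter (fun w => s xm < s w) ⊂ topOf s C W :=
              Finset.ssubset_iff_of_subset hsub3 |>.mpr ⟨xm, hmem, hne⟩
            have := Finset.card_lt_card hss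
            omega
          have hμsmall : μ ≤ y - 1 := by
            have hsub4 : topOf s C W ∩ M ⊆ (topOf s y (W ∩ M)).erase xm := by
              intro w hw
              rw [Finset.mem_inter] at hw
              have hwW : w ∈ W := topOf_subset _ _ hw.1
              have hwne : w ≠ xm := fun e => hxmnt (e ▸ hw.1)
              have hlt : s xm < s w := by
                rcases lt_trichotomy (s xm) (s w) with h | h | h
                · exact h
                · exact absurd (hs (Finset.mem_coe.mpr hwW) (Finset.mem_coe.mpr hxmW) h.symm)
                    hwne
                · exact absurd (mem_topOf_of_lt hw.1 hxmW h) hxmnt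
              refine Finset.mem_erase.mpr ⟨hwne, ?_⟩
              exact mem_topOf_of_lt hxmr (Finset.mem_inter.mpr ⟨hwW, hw.2⟩) hlt
            have := Finset.card_le_card hsub4
            rw [Finset.card_erase_of_mem hxmr, cry] at this
            exact this
          omega
      · -- x ∈ n_{C-y} \ n_v (a nonminority)
        have hxNW : x ∈ W \ M := topOf_subset _ _ hxn
        have hxM : x ∉ M := (Finset.mem_sdiff.mp hxNW).2
        by_cases hzM : z ∈ M
        · -- P2 : z a minority outside r_y
          have hzMW : z ∈ W ∩ M := Finset.mem_inter.mpr ⟨hzW, hzM⟩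
          by_contra hcon
          have hsxz : s x < s z := by
            rcases lt_trichotomy (s x) (s z) with h | h | h
            · exact h
            · exact absurd (hs (Finset.mem_coe.mpr hxW) (Finset.mem_coe.mpr hzW) h)
                (fun e => hxM (e ▸ hzM))
            · exact absurd h hcon
          have hyCv : y < C - v := by
            by_contra h
            push_neg at h
            exact hxnv (topOf_mono (by omega) _ hxn)
          have hμy : μ ≤ y := by omega
          obtain ⟨zm, hzmm, hzmmax⟩ := Finset.exists_max_image
            ((W ∩ M) \ topOf s y (W ∩ M)) s ⟨z, Finset.mem_sdiff.mpr ⟨hzMW, hzry⟩⟩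
          rw [Finset.mem_sdiff] at hzmm
          have hzmW : zm ∈ W := hMWsub hzmm.1
          have hzmM : zm ∈ M := (Finset.mem_inter.mp hzmm.1).2
          have hsxzm : s x < s zm :=
            lt_of_lt_of_le hsxz (hzmmax z (Finset.mem_sdiff.mpr ⟨hzMW, hzry⟩))
          have hrank : W.filter (fun w => s zm < s w) ⊆
              topOf s y (W ∩ M) ∪ (topOf s (C - y) (W \ M)).erase x := by
            intro w hw
            rw [Finset.mem_filter] at hw
            by_cases hwM : w ∈ M
            · have hwMW : w ∈ W ∩ M := Finset.mem_inter.mpr ⟨hw.1, hwM⟩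
              have : w ∈ topOf s y (W ∩ M) := by
                by_contra h
                exact absurd (hzmmax w (Finset.mem_sdiff.mpr ⟨hwMW, h⟩)) (not_le.mpr hw.2)
              exact Finset.mem_union_left _ this
            · have hwNW : w ∈ W \ M := Finset.mem_sdiff.mpr ⟨hw.1, hwM⟩
              have hxw : s x < s w := lt_trans hsxzm hw.2
              refine Finset.mem_union_right _ (Finset.mem_erase.mpr
                ⟨fun e => lt_irrefl _ (e ▸ hxw), mem_topOf_of_lt hxn hwNW hxw⟩)
          have hCyp : 1 ≤ C - y := by
            have : (topOf s (C - y) (W \ M)).Nonempty := ⟨x, hxn⟩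
            rw [← Finset.card_pos, cny] at this
            omega
          have hrankcard : (W.filter (fun w => s zm < s w)).card < C := by
            have h1 := Finset.card_le_card hrank
            have h2 := Finset.card_union_le (topOf s y (W ∩ M))
              ((topOf s (C - y) (W \ M)).erase x)
            rw [Finset.card_erase_of_mem hxn, cry, cny] at h2
            omega
          have hzmtop : zm ∈ topOf s C W :=
            mem_topOf_of_rank hs (Finset.Subset.refl W) hC hzmW hrankcard
          have hsub5 : insert zm (topOf s y (W ∩ M)) ⊆ topOf s C W ∩ M := by
            intro w hw
            rw [Finset.mem_insert] at hw
            rcases hw with rfl | hw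
            · exact Finset.mem_inter.mpr ⟨hzmtop, hzmM⟩
            · have hwM : w ∈ M := (Finset.mem_inter.mp (topOf_subset _ _ hw)).2
              have hlt : s zm < s w := lt_score_topOf hs hMWsub hw hzmm.1 hzmm.2
              exact Finset.mem_inter.mpr
                ⟨mem_topOf_of_lt hzmtop (hMWsub (topOf_subset _ _ hw)) hlt, hwM⟩
          have := Finset.card_le_card hsub5
          rw [Finset.card_insert_of_notMem hzmm.2, cry] at this
          omega
        · have hzNW : z ∈ W \ M := Finset.mem_sdiff.mpr ⟨hzW, hzM⟩
          exact lt_score_topOf hs hNWsub hxn hzNW hzny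
  rw [hfill]
  exact Finset.union_sdiff_of_subset hsubuv

lemma smRound_def (M : Finset ι) (m : ℝ) (P : Finset ι) (q : ℕ) :
    smRound M s m P q = topOf s (min ⌈m * (q:ℝ)⌉₊ (P ∩ M).card) (P ∩ M) ∪
      topOf s (q - (topOf s (min ⌈m * (q:ℝ)⌉₊ (P ∩ M).card) (P ∩ M)).card)
        (P \ topOf s (min ⌈m * (q:ℝ)⌉₊ (P ∩ M).card) (P ∩ M)) := rfl

lemma saRound_def (M : Finset ι) (m : ℝ) (P : Finset ι) (hired Q q : ℕ) :
    saRound M s m P hired Q q =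
      topOf s (min (⌈m * (Q:ℝ)⌉₊ - hired) (P ∩ M).card) (P ∩ M) ∪
      topOf s (q - (topOf s (min (⌈m * (Q:ℝ)⌉₊ - hired) (P ∩ M).card) (P ∩ M)).card)
        (P \ topOf s (min (⌈m * (Q:ℝ)⌉₊ - hired) (P ∩ M).card) (P ∩ M)) := rfl

lemma finset_sdiff_sdiff (X Y Z : Finset ι) : (X \ Y) \ Z = X \ (Y ∪ Z) := by
  have := @sdiff_sdiff_left (Finset ι) _ X Y Z
  simpa using this

lemma ceil_le_self {m : ℝ} (hm0 : 0 ≤ m) (hm1 : m ≤ 1) (n : ℕ) : ⌈m * (n : ℝ)⌉₊ ≤ n := by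
  rw [Nat.ceil_le]
  calc m * (n : ℝ) ≤ 1 * (n : ℝ) := by
        apply mul_le_mul_of_nonneg_right hm1 (Nat.cast_nonneg n)
    _ = (n : ℝ) := one_mul _

lemma smRound_eq (W M : Finset ι) (hs : Set.InjOn s ↑W) {m : ℝ} (hm0 : 0 ≤ m)
    (hm1 : m ≤ 1) (Q : ℕ) (hQ : Q ≤ W.card) :
    smRound M s m W Q =
      topOf s (max (min ⌈m * (Q:ℝ)⌉₊ (W ∩ M).card) ((topOf s Q W ∩ M).card)) (W ∩ M) ∪
      topOf s (Q - max (min ⌈m * (Q:ℝ)⌉₊ (W ∩ M).card) ((topOf s Q W ∩ M).card))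
        (W \ M) := by
  have huQ : min ⌈m * (Q:ℝ)⌉₊ (W ∩ M).card ≤ Q :=
    le_trans (min_le_left _ _) (ceil_le_self hm0 hm1 Q)
  have huMW : min ⌈m * (Q:ℝ)⌉₊ (W ∩ M).card ≤ (W ∩ M).card := min_le_right _ _
  have hμQ : (topOf s Q W ∩ M).card ≤ Q := by
    have h1 := Finset.card_le_card
      (Finset.inter_subset_left (s₁ := topOf s Q W) (s₂ := M))
    rw [card_topOf] at h1
    omega
  have hE := lemG W M hs (min ⌈m * (Q:ℝ)⌉₊ (W ∩ M).card) 0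
    (Q - min ⌈m * (Q:ℝ)⌉₊ (W ∩ M).card) huMW (Nat.zero_le _) (by omega)
  have hsum : min ⌈m * (Q:ℝ)⌉₊ (W ∩ M).card + 0 +
      (Q - min ⌈m * (Q:ℝ)⌉₊ (W ∩ M).card) = Q := by omega
  rw [hsum, topOf_zero, Finset.union_empty, Nat.sub_zero, min_eq_left hμQ] at hE
  rw [smRound_def, card_topOf, min_eq_left huMW, hE]

lemma key_step (W M : Finset ι) (hs : Set.InjOn s ↑W) {m : ℝ}
    (hm0 : 0 ≤ m) (hm1 : m ≤ 1) (Q q : ℕ) (hQq : Q + q ≤ W.card) :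
    smRound M s m W Q ∪ saRound M s m (W \ smRound M s m W Q)
      ((smRound M s m W Q ∩ M).card) (Q + q) q = smRound M s m W (Q + q) := by
  have hKQ : ⌈m * (Q:ℝ)⌉₊ ≤ Q := ceil_le_self hm0 hm1 Q
  have hK'Qq : ⌈m * ((Q+q:ℕ):ℝ)⌉₊ ≤ Q + q := ceil_le_self hm0 hm1 (Q+q)
  have hKK' : ⌈m * (Q:ℝ)⌉₊ ≤ ⌈m * ((Q+q:ℕ):ℝ)⌉₊ := by
    apply Nat.ceil_le_ceil
    apply mul_le_mul_of_nonneg_left _ hm0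
    exact_mod_cast Nat.le_add_right Q q
  have hK'K : ⌈m * ((Q+q:ℕ):ℝ)⌉₊ ≤ ⌈m * (Q:ℝ)⌉₊ + q := by
    have h1 : m * ((Q+q:ℕ):ℝ) ≤ m * (Q:ℝ) + (q:ℝ) := by
      push_cast
      nlinarith [Nat.cast_nonneg (α := ℝ) q]
    calc ⌈m * ((Q+q:ℕ):ℝ)⌉₊ ≤ ⌈m * (Q:ℝ) + (q:ℕ)⌉₊ :=
        Nat.ceil_le_ceil (by exact_mod_cast h1)
      _ = ⌈m * (Q:ℝ)⌉₊ + q := Nat.ceil_add_natCast (by positivity) q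
  set K := ⌈m * (Q:ℝ)⌉₊
  set K' := ⌈m * ((Q+q:ℕ):ℝ)⌉₊
  set MWc := (W ∩ M).card with hMWcdef
  set μQ := (topOf s Q W ∩ M).card with hμQdef
  set μ' := (topOf s (Q+q) W ∩ M).card with hμ'def
  have hμmono : μQ ≤ μ' := Finset.card_le_card
    (Finset.inter_subset_inter (topOf_mono (by omega) _) (le_refl _))
  have hcards : ∀ n, n ≤ W.card → (topOf s n W).card = n := by
    intro n hn; rw [card_topOf]; omega
  have hμ'q : μ' ≤ μQ + q := by
    have hsub : topOf s (Q+q) W ∩ M ⊆ (topOf s Q W ∩ M) ∪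
        (topOf s (Q+q) W \ topOf s Q W) := by
      intro a ha
      rw [Finset.mem_inter] at ha
      by_cases h : a ∈ topOf s Q W
      · exact Finset.mem_union_left _ (Finset.mem_inter.mpr ⟨h, ha.2⟩)
      · exact Finset.mem_union_right _ (Finset.mem_sdiff.mpr ⟨ha.1, h⟩)
    have h1 := Finset.card_le_card hsub
    have h2 := Finset.card_union_le (topOf s Q W ∩ M) (topOf s (Q+q) W \ topOf s Q W)
    have h3 : (topOf s (Q+q) W \ topOf s Q W).card = q := by
      rw [Finset.card_sdiff_of_subset (topOf_mono (by omega) _), hcards _ hQq,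
        hcards _ (by omega)]
      omega
    omega
  have hμ'MW : μ' ≤ MWc := Finset.card_le_card (fun a ha => by
    rw [Finset.mem_inter] at ha ⊢
    exact ⟨topOf_subset _ _ ha.1, ha.2⟩)
  have hμ'C : μ' ≤ Q + q := by
    have h1 := Finset.card_le_card
      (Finset.inter_subset_left (s₁ := topOf s (Q+q) W) (s₂ := M))
    rw [hcards _ hQq] at h1
    exact h1
  have hμQQ : μQ ≤ Q := by
    have h1 := Finset.card_le_card
      (Finset.inter_subset_left (s₁ := topOf s Q W) (s₂ := M))
    rw [hcards _ (by omega : Q ≤ W.card)] at h1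
    exact h1
  have hμQMW : μQ ≤ MWc := Finset.card_le_card (fun a ha => by
    rw [Finset.mem_inter] at ha ⊢
    exact ⟨topOf_subset _ _ ha.1, ha.2⟩)
  have hWsplit : MWc + (W \ M).card = W.card := Finset.card_inter_add_card_sdiff W M
  have hQNW : Q ≤ μQ + (W \ M).card := by
    have h1 : (topOf s Q W).card = μQ + (topOf s Q W \ M).card := by
      rw [hμQdef, Finset.card_inter_add_card_sdiff]
    have h2 := Finset.card_le_card (Finset.sdiff_subset_sdiff
      (topOf_subset (s := s) Q W) (le_refl M))
    rw [hcards _ (by omega : Q ≤ W.card)] at h1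
    omega
  set ω := max (min K MWc) μQ with hωdef
  have hωMW : ω ≤ MWc := by omega
  have hωQ : ω ≤ Q := by omega
  rw [smRound_eq W M hs hm0 hm1 Q (by omega), smRound_eq W M hs hm0 hm1 (Q+q) hQq]
  rw [← hMWcdef, ← hμQdef, ← hμ'def, ← hωdef]
  have hrsub : topOf s ω (W ∩ M) ⊆ M :=
    fun a ha => (Finset.mem_inter.mp (topOf_subset _ _ ha)).2
  have hnM : ∀ a ∈ topOf s (Q - ω) (W \ M), a ∉ M :=
    fun a ha => (Finset.mem_sdiff.mp (topOf_subset _ _ ha)).2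
  have hAM : (topOf s ω (W ∩ M) ∪ topOf s (Q - ω) (W \ M)) ∩ M
      = topOf s ω (W ∩ M) := by
    rw [Finset.union_inter_distrib_right, Finset.inter_eq_left.mpr hrsub]
    have h0 : topOf s (Q - ω) (W \ M) ∩ M = ∅ := by
      rw [Finset.eq_empty_iff_forall_notMem]
      intro a ha
      rw [Finset.mem_inter] at ha
      exact hnM a ha.1 ha.2
    rw [h0, Finset.union_empty]
  have hAMcard : ((topOf s ω (W ∩ M) ∪ topOf s (Q - ω) (W \ M)) ∩ M).card = ω := by
    rw [hAM, card_topOf]; omega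
  have hPM : (W \ (topOf s ω (W ∩ M) ∪ topOf s (Q - ω) (W \ M))) ∩ M
      = (W ∩ M) \ topOf s ω (W ∩ M) := by
    ext a
    simp only [Finset.mem_inter, Finset.mem_sdiff, Finset.mem_union]
    constructor
    · rintro ⟨⟨haW, haA⟩, haM⟩
      exact ⟨⟨haW, haM⟩, fun h => haA (Or.inl h)⟩
    · rintro ⟨⟨haW, haM⟩, har⟩
      exact ⟨⟨haW, fun h => h.elim har (fun h' => hnM a h' haM)⟩, haM⟩
  have hMWr : ((W ∩ M) \ topOf s ω (W ∩ M)).card = MWc - ω := by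
    rw [Finset.card_sdiff_of_subset (topOf_subset _ _), card_topOf]
    omega
  set b := min (K' - ω) (MWc - ω) with hbdef
  have hbq : b ≤ q := by omega
  have hbMW : b ≤ MWc - ω := min_le_right _ _
  rw [saRound_def, hAMcard, hPM, hMWr, ← hbdef, card_topOf, hMWr, min_eq_left hbMW]
  have hsplit := topOf_add (s := s) ω b (W ∩ M)
  have hres : (topOf s ω (W ∩ M) ∪ topOf s (Q - ω) (W \ M)) ∪
      topOf s b ((W ∩ M) \ topOf s ω (W ∩ M)) =
      topOf s (ω + b) (W ∩ M) ∪ topOf s (Q - ω) (W \ M) := by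
    rw [Finset.union_right_comm, ← hsplit]
  rw [← Finset.union_assoc, finset_sdiff_sdiff, hres]
  have hG := lemG W M hs (ω + b) (Q - ω) (q - b) (by omega) (by omega) (by omega)
  have hsum2 : (ω + b) + (Q - ω) + (q - b) = Q + q := by omega
  rw [hsum2] at hG
  have hsum3 : Q + q - (Q - ω) = ω + q := by omega
  rw [hsum3, ← hμ'def] at hG
  rw [hG]
  have hfinal : max (ω + b) (min μ' (ω + q)) = max (min K' MWc) μ' := by omega
  rw [hfinal]

end AuxProof


section AuxProof2
variable {s : ι → ℝ}

lemma phiSAaux_nil (M : Finset ι) (m : ℝ) (P A : Finset ι) (Q : ℕ) :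
    phiSAaux M s m P A Q [] = ∅ := rfl

lemma phiSAaux_cons (M : Finset ι) (m : ℝ) (P A : Finset ι) (Q q : ℕ) (rest : List ℕ) :
    phiSAaux M s m P A Q (q :: rest) =
      saRound M s m P ((A ∩ M).card) (Q + q) q ∪
      phiSAaux M s m (P \ saRound M s m P ((A ∩ M).card) (Q + q) q)
        (A ∪ saRound M s m P ((A ∩ M).card) (Q + q) q) (Q + q) rest := rfl

lemma smRound_zero (M : Finset ι) (m : ℝ) (W : Finset ι) : smRound M s m W 0 = ∅ := by
  rw [smRound_def]
  simp [topOf_zero]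

lemma phiSAaux_eq (W M : Finset ι) (hs : Set.InjOn s ↑W) {m : ℝ}
    (hm0 : 0 ≤ m) (hm1 : m ≤ 1) :
    ∀ (lam : List ℕ) (Q : ℕ), Q + lam.sum ≤ W.card →
      smRound M s m W Q ∪ phiSAaux M s m (W \ smRound M s m W Q)
        (smRound M s m W Q) Q lam = smRound M s m W (Q + lam.sum) := by
  intro lam
  induction lam with
  | nil =>
    intro Q h
    rw [phiSAaux_nil, Finset.union_empty, List.sum_nil, Nat.add_zero]
  | cons q rest ih =>
    intro Q h
    rw [List.sum_cons] at h ⊢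
    rw [phiSAaux_cons, ← Finset.union_assoc, finset_sdiff_sdiff,
      key_step W M hs hm0 hm1 Q q (by omega)]
    have := ih (Q + q) (by omega)
    rw [this]
    congr 1
    omega

lemma seq_sum (φ : Rule ι) (hφA : φ.AggIndep) (M : Finset ι) (m : ℝ) :
    ∀ (lam : List ℕ) (W A : Finset ι), lam ≠ [] → lam.sum ≤ W.card →
      φ.seq M s m W A lam = φ.sel M s m W A lam.sum := by
  intro lam
  induction lam with
  | nil => intro W A h _; exact absurd rfl h
  | cons q rest ih =>
    intro W A _ hsum
    rw [List.sum_cons] at hsum ⊢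
    by_cases hr : rest = []
    · subst hr
      simp only [List.sum_nil, Nat.add_zero, Rule.seq, Finset.union_empty]
    · have hq : q ≤ W.card := by
        have := rest.sum
        omega
      have hHsub := φ.sel_subset M s m W A q
      have hHcard : (φ.sel M s m W A q).card = q := by
        rw [φ.sel_card]; omega
      have hrest : rest.sum ≤ (W \ φ.sel M s m W A q).card := by
        rw [Finset.card_sdiff_of_subset hHsub, hHcard]
        omega
      have h2 := hφA M s m W A (q + rest.sum) q (by omega)
      have h3 : q + rest.sum - q = rest.sum := by omega
      rw [h3] at h2
      rw [h2]
      simp only [Rule.seq]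
      rw [ih (W \ φ.sel M s m W A q) (A ∪ φ.sel M s m W A q) hr hrest]
      rw [Finset.union_empty]

end AuxProof2

/-- If `φ` is an aggregation independent rule whose single-round choice
`φ(W,A,⟨q⟩)` (for every pool `W`, previously hired set `A`, and `q ≤ |W|`) is the
minority reserves choice from `W` — the `min(⌈m·q⌉, |M ∩ W|)` highest-scoring available
minority workers together with the highest-scoring remaining available workers filling up
to `q` hires — then for every hiring problem `(W, M, s, m)` and every sequence of hires
`λ = ⟨q₁,…,q_t⟩` with `q₁+⋯+q_t ≤ |W|` and `m·(q₁+⋯+q_r)` an integer for every `r ≤ t`,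
`φ(W,λ) = φ^SA(W,λ)`. -/
theorem aggindep_minority_reserves_is_phiSA (φ : Rule ι)
    (hφA : φ.AggIndep)
    (hφSM : ∀ (M : Finset ι) (s : ι → ℝ) (m : ℝ) (W A : Finset ι) (q : ℕ),
      0 ≤ m → m ≤ 1 → q ≤ W.card → φ.sel M s m W A q = smRound M s m W q)
    (W M : Finset ι) (s : ι → ℝ) (m : ℝ) (lam : List ℕ)
    (hMW : M ⊆ W) (hs : Set.InjOn s ↑W) (hm0 : 0 ≤ m) (hm1 : m ≤ 1)
    (hsum : lam.sum ≤ W.card)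
    (hint : ∀ r : ℕ, ∃ k : ℕ, m * (((lam.take r).sum : ℕ) : ℝ) = (k : ℝ)) :
    φ.seq M s m W ∅ lam = phiSA M s m W lam := by
  cases lam with
  | nil => rfl
  | cons q rest =>
    have h1 := seq_sum (s := s) φ hφA M m (q :: rest) W ∅ (List.cons_ne_nil q rest) hsum
    rw [h1, hφSM M s m W ∅ (q :: rest).sum hm0 hm1 hsum]
    have h2 := phiSAaux_eq W M hs hm0 hm1 (q :: rest) 0 (by omega)
    rw [smRound_zero, Finset.sdiff_empty, Finset.empty_union, Nat.zero_add] at h2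
    rw [← h2]
    rfl
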